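/- arXiv:2605.29186 — 2 statements merged into one kernel-verified Lean document; each statement's English description precedes it below -/
import Mathlib

section
/- Let m_h(θ) = √(a_h(θ)² + b_h(θ)²) be the rectified symbol with (β₁,β₂) ≠ (0,0). If e ∈ ℝ² satisfies β·e ≠ 0, then the one-sided derivatives of t ↦ m_h(te) at t = 0 are +|β·e|/h and −|β·e|/h respectively; in particular t ↦ m_h(te) is not differentiable at t = 0. -/
open Real Filter Asymptotics Set Topology

noncomputable def mh (ε h β₁ β₂ θ₁ θ₂ : ℝ) : ℝ :=
  Real.sqrt (((2 * ε / h ^ 2) * (2 - Real.cos θ₁ - Real.cos θ₂)) ^ 2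
    + ((β₁ * Real.sin θ₁ + β₂ * Real.sin θ₂) / h) ^ 2)

theorem rectified_symbol_corner (ε h β₁ β₂ e₁ e₂ : ℝ) (hε : 0 < ε) (hh : 0 < h)
    (hβ : (β₁, β₂) ≠ (0, 0)) (he : β₁ * e₁ + β₂ * e₂ ≠ 0) :
    HasDerivWithinAt (fun t : ℝ => mh ε h β₁ β₂ (t * e₁) (t * e₂))
        (|β₁ * e₁ + β₂ * e₂| / h) (Set.Ici 0) 0 ∧
    HasDerivWithinAt (fun t : ℝ => mh ε h β₁ β₂ (t * e₁) (t * e₂))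
        (-(|β₁ * e₁ + β₂ * e₂| / h)) (Set.Iic 0) 0 ∧
    ¬ DifferentiableAt ℝ (fun t : ℝ => mh ε h β₁ β₂ (t * e₁) (t * e₂)) 0 := by
  set c : ℝ := (β₁ * e₁ + β₂ * e₂) / h with hcdef
  have hc0 : c ≠ 0 := div_ne_zero he hh.ne'
  set B : ℝ → ℝ := fun t => (β₁ * Real.sin (t * e₁) + β₂ * Real.sin (t * e₂)) / h with hBdef
  set A : ℝ → ℝ := fun t => (2 * ε / h ^ 2) * (2 - Real.cos (t * e₁) - Real.cos (t * e₂)) with hAdef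
  have hB0 : B 0 = 0 := by simp [hBdef]
  -- derivative of B
  have hsin : ∀ a : ℝ, HasDerivAt (fun t : ℝ => Real.sin (t * a)) a 0 := by
    intro a
    have := (Real.hasDerivAt_sin ((0:ℝ) * a)).comp 0 ((hasDerivAt_id (0:ℝ)).mul_const a)
    simpa [Function.comp_def] using this
  have hBderiv : HasDerivAt B c 0 := by
    have := (((hsin e₁).const_mul β₁).add ((hsin e₂).const_mul β₂)).div_const h
    simpa [hBdef, hcdef] using this
  -- bounds on A
  set K : ℝ := ε / h ^ 2 * (e₁ ^ 2 + e₂ ^ 2) with hKdef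
  have hKnn : 0 ≤ K := by positivity
  have hAnonneg : ∀ t, 0 ≤ A t := by
    intro t
    have h1 := Real.cos_le_one (t * e₁)
    have h2 := Real.cos_le_one (t * e₂)
    have hp : (0:ℝ) ≤ 2 * ε / h ^ 2 := by positivity
    have : (0:ℝ) ≤ 2 - Real.cos (t * e₁) - Real.cos (t * e₂) := by linarith
    exact mul_nonneg hp this
  have hAle : ∀ t, A t ≤ K * t ^ 2 := by
    intro t
    have h1 := Real.one_sub_sq_div_two_le_cos (x := t * e₁)
    have h2 := Real.one_sub_sq_div_two_le_cos (x := t * e₂)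
    have hp : (0:ℝ) < ε / h ^ 2 := by positivity
    have hle : 2 - Real.cos (t * e₁) - Real.cos (t * e₂) ≤ (t*e₁)^2/2 + (t*e₂)^2/2 := by
      linarith
    have := mul_le_mul_of_nonneg_left hle (by positivity : (0:ℝ) ≤ 2 * ε / h ^ 2)
    calc A t ≤ (2 * ε / h ^ 2) * ((t*e₁)^2/2 + (t*e₂)^2/2) := this
      _ = K * t ^ 2 := by rw [hKdef]; ring
  -- remainder
  set r : ℝ → ℝ := fun t => Real.sqrt ((A t) ^ 2 + (B t) ^ 2) - |B t| with hrdef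
  have hr0 : ∀ t, 0 ≤ r t := by
    intro t
    have : |B t| ≤ Real.sqrt ((A t) ^ 2 + (B t) ^ 2) := by
      rw [← Real.sqrt_sq_eq_abs]
      exact Real.sqrt_le_sqrt (by nlinarith [sq_nonneg (A t)])
    simpa [hrdef] using sub_nonneg.2 this
  have hr1 : ∀ t, r t ≤ K * t ^ 2 := by
    intro t
    have hs : Real.sqrt ((A t) ^ 2 + (B t) ^ 2) ≤ |A t| + |B t| := by
      calc Real.sqrt ((A t) ^ 2 + (B t) ^ 2) ≤ Real.sqrt ((|A t| + |B t|) ^ 2) := by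
            apply Real.sqrt_le_sqrt
            nlinarith [abs_nonneg (A t), abs_nonneg (B t), sq_abs (A t), sq_abs (B t),
              mul_nonneg (abs_nonneg (A t)) (abs_nonneg (B t))]
        _ = |A t| + |B t| := Real.sqrt_sq (by positivity)
    have hA : |A t| = A t := abs_of_nonneg (hAnonneg t)
    have := hAle t
    simp only [hrdef]
    linarith [hs, hA.symm ▸ this]
  have hrzero : r 0 = 0 := by
    norm_num [hrdef, hB0, hAdef]
  have hrderiv : HasDerivAt r 0 0 := by
    rw [hasDerivAt_iff_isLittleO]
    have hO : (fun t : ℝ => r t) =O[𝓝 0] fun t => t ^ 2 := by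
      refine IsBigO.of_bound K (Filter.Eventually.of_forall fun t => ?_)
      have h1 := hr0 t; have h2 := hr1 t
      rw [Real.norm_eq_abs, Real.norm_eq_abs, abs_of_nonneg h1, abs_of_nonneg (sq_nonneg t)]
      exact h2
    have ho : (fun t : ℝ => t ^ 2) =o[𝓝 (0:ℝ)] fun t => t := by
      have h1 : (fun t : ℝ => t) =o[𝓝 (0:ℝ)] (fun _ => (1:ℝ)) :=
        (isLittleO_one_iff ℝ).2 tendsto_id
      have := h1.mul_isBigO (isBigO_refl (fun t : ℝ => t) (𝓝 0))
      simpa [pow_two] using this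
    have := hO.trans_isLittleO ho
    simpa [hrzero] using this
  -- sign
  set s : ℝ := if 0 < c then 1 else -1 with hsdef
  have hsc : s * c = |c| := by
    rcases lt_trichotomy 0 c with hl | hl | hl
    · simp [hsdef, hl, abs_of_pos hl]
    · exact absurd hl.symm hc0
    · rw [hsdef, if_neg (by linarith), abs_of_neg hl]; ring
  have habs : ∀ x : ℝ, |s * x| = |x| := by
    intro x
    rcases lt_trichotomy 0 c with hl | hl | hl
    · simp [hsdef, hl]
    · exact absurd hl.symm hc0
    · rw [hsdef, if_neg (by linarith)]; simp
  have hscpos : 0 < s * c := by rw [hsc]; exact abs_pos.2 hc0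
  have hsign : ∀ᶠ t in 𝓝[≠] (0:ℝ), 0 < s * B t / t := by
    have hslope : Tendsto (fun t => B t / t) (𝓝[≠] (0:ℝ)) (𝓝 c) := by
      have h0 := hasDerivAt_iff_tendsto_slope.1 hBderiv
      refine h0.congr fun t => ?_
      simp [slope_def_field, hB0]
    have : Tendsto (fun t => s * (B t / t)) (𝓝[≠] (0:ℝ)) (𝓝 (s * c)) :=
      (tendsto_const_nhds).mul hslope
    filter_upwards [this.eventually (eventually_gt_nhds hscpos)] with t ht
    rwa [mul_div_assoc]
  -- function equality
  have hfeq : (fun t : ℝ => mh ε h β₁ β₂ (t * e₁) (t * e₂)) = fun t => |B t| + r t := by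
    funext t
    simp only [mh, hrdef, hBdef, hAdef]
    ring
  -- Ici side
  have hIci : HasDerivWithinAt (fun t : ℝ => mh ε h β₁ β₂ (t * e₁) (t * e₂))
      (|β₁ * e₁ + β₂ * e₂| / h) (Set.Ici 0) 0 := by
    have hev : (fun t => |B t|) =ᶠ[𝓝[Set.Ici (0:ℝ)] 0] fun t => s * B t := by
      rw [← Set.Ioi_union_left, nhdsWithin_union, Filter.EventuallyEq, eventually_sup]
      constructor
      · have h1 : ∀ᶠ t in 𝓝[Set.Ioi (0:ℝ)] 0, 0 < s * B t / t :=
          hsign.filter_mono (nhdsWithin_mono _ (fun x hx => ne_of_gt hx))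
        filter_upwards [h1, self_mem_nhdsWithin] with t ht ht'
        have htpos : (0:ℝ) < t := ht'
        have : 0 < s * B t := by
          by_contra hcon
          push_neg at hcon
          have := div_nonpos_of_nonpos_of_nonneg hcon htpos.le
          linarith
        rw [← habs (B t), abs_of_pos this]
      · rw [nhdsWithin_singleton, eventually_pure]
        simp [hB0]
    have h1 : HasDerivWithinAt (fun t => |B t|) (s * c) (Set.Ici 0) 0 :=
      ((hBderiv.const_mul s).hasDerivWithinAt).congr_of_eventuallyEq hev (by simp [hB0])
    have h2 := h1.add hrderiv.hasDerivWithinAt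
    rw [hfeq]
    have : s * c + 0 = |β₁ * e₁ + β₂ * e₂| / h := by
      rw [add_zero, hsc, hcdef, abs_div, abs_of_pos hh]
    rwa [this] at h2
  -- Iic side
  have hIic : HasDerivWithinAt (fun t : ℝ => mh ε h β₁ β₂ (t * e₁) (t * e₂))
      (-(|β₁ * e₁ + β₂ * e₂| / h)) (Set.Iic 0) 0 := by
    have hev : (fun t => |B t|) =ᶠ[𝓝[Set.Iic (0:ℝ)] 0] fun t => (-s) * B t := by
      rw [← Set.Iio_union_right, nhdsWithin_union, Filter.EventuallyEq, eventually_sup]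
      constructor
      · have h1 : ∀ᶠ t in 𝓝[Set.Iio (0:ℝ)] 0, 0 < s * B t / t :=
          hsign.filter_mono (nhdsWithin_mono _ (fun x hx => ne_of_lt hx))
        filter_upwards [h1, self_mem_nhdsWithin] with t ht ht'
        have htneg : t < (0:ℝ) := ht'
        have : s * B t < 0 := by
          by_contra hcon
          push_neg at hcon
          have := div_nonpos_of_nonneg_of_nonpos hcon htneg.le
          linarith
        rw [← habs (B t), abs_of_neg this]; ring
      · rw [nhdsWithin_singleton, eventually_pure]
        simp [hB0]
    have h1 : HasDerivWithinAt (fun t => |B t|) ((-s) * c) (Set.Iic 0) 0 :=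
      ((hBderiv.const_mul (-s)).hasDerivWithinAt).congr_of_eventuallyEq hev (by simp [hB0])
    have h2 := h1.add hrderiv.hasDerivWithinAt
    rw [hfeq]
    have : (-s) * c + 0 = -(|β₁ * e₁ + β₂ * e₂| / h) := by
      have : s * c = |β₁ * e₁ + β₂ * e₂| / h := by
        rw [hsc, hcdef, abs_div, abs_of_pos hh]
      rw [add_zero, neg_mul, this]
    rwa [this] at h2
  refine ⟨hIci, hIic, fun hdiff => ?_⟩
  have hd := hdiff.hasDerivAt
  have e1 : deriv (fun t : ℝ => mh ε h β₁ β₂ (t * e₁) (t * e₂)) 0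
      = |β₁ * e₁ + β₂ * e₂| / h := by
    have hu : UniqueDiffWithinAt ℝ (Set.Ici (0:ℝ)) 0 := uniqueDiffOn_Ici 0 0 Set.self_mem_Ici
    have := hIci.derivWithin hu
    rw [← this, (hd.hasDerivWithinAt (s := Set.Ici 0)).derivWithin hu]
  have e2 : deriv (fun t : ℝ => mh ε h β₁ β₂ (t * e₁) (t * e₂)) 0
      = -(|β₁ * e₁ + β₂ * e₂| / h) := by
    have hu : UniqueDiffWithinAt ℝ (Set.Iic (0:ℝ)) 0 := uniqueDiffOn_Iic 0 0 Set.self_mem_Iic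
    have := hIic.derivWithin hu
    rw [← this, (hd.hasDerivWithinAt (s := Set.Iic 0)).derivWithin hu]
  have : |β₁ * e₁ + β₂ * e₂| / h = 0 := by linarith [e1.symm.trans e2]
  have : |β₁ * e₁ + β₂ * e₂| = 0 := by
    field_simp at this
    simpa using this
  exact he (abs_eq_zero.1 this)
end

section
/- If (β₁,β₂) ≠ (0,0), the rectified symbol m_h(θ₁,θ₂) = √(a_h(θ₁,θ₂)² + b_h(θ₁,θ₂)²), regarded as a 2π-periodic continuous function on ℝ², does not coincide with any trigonometric polynomial in (θ₁,θ₂), i.e., with any finite linear combination of functions exp(i(kθ₁ + lθ₂)) for integers k, l. -/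
open Real

theorem rectified_symbol_not_trig_poly (ε h β₁ β₂ : ℝ) (hε : 0 < ε) (hh : 0 < h)
    (hβ : (β₁, β₂) ≠ (0, 0)) :
    ¬ ∃ (F : Finset (ℤ × ℤ)) (c : ℤ × ℤ → ℂ), ∀ θ₁ θ₂ : ℝ,
      ((mh ε h β₁ β₂ θ₁ θ₂ : ℝ) : ℂ) =
        ∑ k ∈ F, c k * Complex.exp (Complex.I * ((k.1 : ℂ) * θ₁ + (k.2 : ℂ) * θ₂)) := by
  rintro ⟨F, c, hF⟩
  have hb0 : β₁ ≠ 0 ∨ β₂ ≠ 0 := by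
    by_contra hcon
    push_neg at hcon
    exact hβ (by simp [hcon.1, hcon.2])
  have hbsq : 0 < β₁ ^ 2 + β₂ ^ 2 := by
    rcases hb0 with h0 | h0 <;> positivity
  set f : ℝ → ℝ := fun t => mh ε h β₁ β₂ (t * β₁) (t * β₂) with hfdef
  set B : ℝ → ℝ := fun t => (β₁ * Real.sin (t * β₁) + β₂ * Real.sin (t * β₂)) / h with hBdef
  set c0 : ℝ := (β₁ ^ 2 + β₂ ^ 2) / h with hc0def
  have hc0 : 0 < c0 := by positivity
  have hf0 : f 0 = 0 := by simp [hfdef, mh]; norm_num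
  have hfB : ∀ t, |B t| ≤ f t := by
    intro t
    calc |B t| = Real.sqrt ((B t) ^ 2) := (Real.sqrt_sq_eq_abs _).symm
      _ ≤ f t := Real.sqrt_le_sqrt (le_add_of_nonneg_left (sq_nonneg _))
  -- derivative of B at 0
  have hBd : HasDerivAt B c0 0 := by
    have h1 : HasDerivAt (fun t : ℝ => Real.sin (t * β₁)) β₁ 0 := by
      simpa using (hasDerivAt_mul_const β₁ (x := (0:ℝ))).sin
    have h2 : HasDerivAt (fun t : ℝ => Real.sin (t * β₂)) β₂ 0 := by
      simpa using (hasDerivAt_mul_const β₂ (x := (0:ℝ))).sin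
    have := ((h1.const_mul β₁).add (h2.const_mul β₂)).div_const h
    simpa [hBdef, hc0def, sq] using this
  have hB0 : B 0 = 0 := by simp [hBdef]
  have hslopeB : Filter.Tendsto (slope B 0) (nhdsWithin 0 {(0:ℝ)}ᶜ) (nhds c0) :=
    hasDerivAt_iff_tendsto_slope.mp hBd
  -- differentiability of f at 0
  set g : ℝ → ℂ := fun t => ∑ k ∈ F, c k * Complex.exp (Complex.I *
    ((k.1 : ℂ) * ((t * β₁ : ℝ) : ℂ) + (k.2 : ℂ) * ((t * β₂ : ℝ) : ℂ))) with hgdef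
  have hfg : ∀ t, ((f t : ℝ) : ℂ) = g t := fun t => hF (t * β₁) (t * β₂)
  have hg : DifferentiableAt ℝ g 0 := by
    apply DifferentiableAt.fun_sum
    intro k _
    apply DifferentiableAt.const_mul
    apply DifferentiableAt.cexp
    have hlin : ∀ b : ℝ, DifferentiableAt ℝ (fun t : ℝ => ((t * b : ℝ) : ℂ)) 0 :=
      fun b => Complex.ofRealCLM.differentiable.differentiableAt.comp 0
        ((differentiable_id.mul_const b).differentiableAt)
    exact (((hlin β₁).const_mul _).add ((hlin β₂).const_mul _)).const_mul _
  have hdf : DifferentiableAt ℝ f 0 := by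
    have hfge : f = fun t => (g t).re := by
      funext t
      rw [← hfg t]
      simp
    rw [hfge]
    exact (Complex.reCLM.differentiable.differentiableAt).comp 0 hg
  have hL := hdf.hasDerivAt
  set L := deriv f 0 with hLdef
  have hslopef : Filter.Tendsto (slope f 0) (nhdsWithin 0 {(0:ℝ)}ᶜ) (nhds L) :=
    hasDerivAt_iff_tendsto_slope.mp hL
  have hsubR : nhdsWithin (0:ℝ) (Set.Ioi 0) ≤ nhdsWithin 0 {(0:ℝ)}ᶜ :=
    nhdsWithin_mono 0 (fun x hx => ne_of_gt hx)
  have hsubL : nhdsWithin (0:ℝ) (Set.Iio 0) ≤ nhdsWithin 0 {(0:ℝ)}ᶜ :=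
    nhdsWithin_mono 0 (fun x hx => ne_of_lt hx)
  -- slope computations
  have hslopef_eq : ∀ t : ℝ, slope f 0 t = f t / t := by
    intro t; rw [slope_def_field, hf0]; ring_nf
  have hslopeB_abs : ∀ t : ℝ, |slope B 0 t| = |B t| / |t| := by
    intro t; rw [slope_def_field, hB0]; rw [abs_div]; ring_nf
  -- L ≥ c0
  have hR : c0 ≤ L := by
    have hBR : Filter.Tendsto (fun t => |slope B 0 t|) (nhdsWithin 0 (Set.Ioi 0)) (nhds c0) := by
      have := (hslopeB.mono_left hsubR).abs
      rwa [abs_of_pos hc0] at this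
    refine le_of_tendsto_of_tendsto hBR (hslopef.mono_left hsubR) ?_
    filter_upwards [self_mem_nhdsWithin] with t ht
    have ht' : (0:ℝ) < t := ht
    rw [hslopef_eq, hslopeB_abs, abs_of_pos ht']
    exact div_le_div_of_nonneg_right (hfB t) ht'.le
  -- L ≤ -c0
  have hLle : L ≤ -c0 := by
    have hBL : Filter.Tendsto (fun t => -|slope B 0 t|) (nhdsWithin 0 (Set.Iio 0)) (nhds (-c0)) := by
      have := ((hslopeB.mono_left hsubL).abs).neg
      rwa [abs_of_pos hc0] at this
    refine le_of_tendsto_of_tendsto (hslopef.mono_left hsubL) hBL ?_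
    filter_upwards [self_mem_nhdsWithin] with t ht
    have ht' : t < 0 := ht
    rw [hslopef_eq, hslopeB_abs, abs_of_neg ht']
    have h1 : |B t| / (-t) ≤ f t / (-t) := div_le_div_of_nonneg_right (hfB t) (by linarith) |>.trans_eq rfl
    have h2 : f t / t = -(f t / (-t)) := by ring
    rw [h2]
    linarith
  linarith
end
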